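/- Let e be a unit vector in ℝ^n, and let V₁,…,V_n be a basis of ℝ^n. Write M_{ij} := V_i⊙V_j − (e·V_i) e⊙V_j − (e·V_j) e⊙V_i. If P is a symmetric n×n matrix satisfying M_{ij} : P = 0 for all 1 ≤ i ≤ j ≤ n, then P = e⊙η for some vector η with η·e = 0. -/
import Mathlib


open Matrix BigOperators

noncomputable section

/-- Frobenius inner product `A : B = tr (A Bᵀ)`. -/
def frob {n : ℕ} (A B : Matrix (Fin n) (Fin n) ℝ) : ℝ := (A * Bᵀ).trace

/-- Symmetrized outer product `U ⊙ V = (1/2)(U⊗V + V⊗U)`. -/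
def odot {n : ℕ} (U V : Fin n → ℝ) : Matrix (Fin n) (Fin n) ℝ :=
  (1 / 2 : ℝ) • (vecMulVec U V + vecMulVec V U)

/-- Lemma 2.3 (ii) (after the change of variables `P ↦ A₀⁻¹PA₀⁻¹`, `e = ξ̂₀`): if a
symmetric matrix `P` is Frobenius-orthogonal to all
`M_{ij} = Vᵢ⊙Vⱼ − (e·Vᵢ) e⊙Vⱼ − (e·Vⱼ) e⊙Vᵢ`, `1 ≤ i ≤ j ≤ n`, for a basis
`V₁,…,V_n` and a unit vector `e`, then `P = e ⊙ η` with `η ⊥ e`. -/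
lemma frob_vmv {n : ℕ} (U W : Fin n → ℝ) (P : Matrix (Fin n) (Fin n) ℝ) :
    frob (vecMulVec U W) P = U ⬝ᵥ (P *ᵥ W) := by
  simp only [frob, Matrix.trace, Matrix.diag, Matrix.mul_apply, vecMulVec_apply,
    transpose_apply, dotProduct, mulVec, Finset.mul_sum]
  apply Finset.sum_congr rfl; intro i _
  apply Finset.sum_congr rfl; intro j _; ring

lemma frob_odot {n : ℕ} (U W : Fin n → ℝ) (P : Matrix (Fin n) (Fin n) ℝ) :
    frob (odot U W) P = (1/2 : ℝ) * (U ⬝ᵥ (P *ᵥ W) + W ⬝ᵥ (P *ᵥ U)) := by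
  simp only [odot, frob, smul_mul_assoc, add_mul, trace_smul, trace_add, smul_eq_mul]
  rw [show (vecMulVec U W * Pᵀ).trace = frob (vecMulVec U W) P from rfl,
    show (vecMulVec W U * Pᵀ).trace = frob (vecMulVec W U) P from rfl,
    frob_vmv, frob_vmv]

lemma dot_mulVec_symm {n : ℕ} {P : Matrix (Fin n) (Fin n) ℝ} (hP : Pᵀ = P)
    (x y : Fin n → ℝ) : x ⬝ᵥ (P *ᵥ y) = y ⬝ᵥ (P *ᵥ x) := by
  rw [Matrix.dotProduct_mulVec]
  conv_lhs => rw [← hP, Matrix.vecMul_transpose]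
  rw [dotProduct_comm]

lemma dot_vmv_mulVec {n : ℕ} (x u v y : Fin n → ℝ) :
    x ⬝ᵥ (vecMulVec u v *ᵥ y) = (x ⬝ᵥ u) * (v ⬝ᵥ y) := by
  simp only [dotProduct, mulVec, vecMulVec_apply, Finset.mul_sum, Finset.sum_mul]
  rw [Finset.sum_comm]
  apply Finset.sum_congr rfl; intro i _
  apply Finset.sum_congr rfl; intro j _; ring

lemma frob_sub {n : ℕ} (A B P : Matrix (Fin n) (Fin n) ℝ) :
    frob (A - B) P = frob A P - frob B P := by
  simp [frob, sub_mul]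

lemma frob_smul {n : ℕ} (c : ℝ) (A P : Matrix (Fin n) (Fin n) ℝ) :
    frob (c • A) P = c * frob A P := by
  simp [frob, smul_mul_assoc]

theorem stmt7 {n : ℕ} (e : Fin n → ℝ) (he : e ⬝ᵥ e = 1)
    (V : Fin n → Fin n → ℝ) (hV : LinearIndependent ℝ V)
    (P : Matrix (Fin n) (Fin n) ℝ) (hP : Pᵀ = P)
    (horth : ∀ i j : Fin n, i ≤ j →
      frob (odot (V i) (V j) - (e ⬝ᵥ V i) • odot e (V j) - (e ⬝ᵥ V j) • odot e (V i))
        P = 0) :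
    ∃ η : Fin n → ℝ, η ⬝ᵥ e = 0 ∧ P = odot e η := by
  set a : Fin n → ℝ := P *ᵥ e with ha
  set Q : Matrix (Fin n) (Fin n) ℝ := P - vecMulVec e a - vecMulVec a e with hQdef
  have haV : ∀ x, e ⬝ᵥ (P *ᵥ x) = a ⬝ᵥ x := by
    intro x
    rw [dot_mulVec_symm hP, ha, dotProduct_comm]
  have hQd : ∀ x y, x ⬝ᵥ (Q *ᵥ y)
      = x ⬝ᵥ (P *ᵥ y) - (e ⬝ᵥ x) * (a ⬝ᵥ y) - (e ⬝ᵥ y) * (a ⬝ᵥ x) := by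
    intro x y
    rw [hQdef, Matrix.sub_mulVec, Matrix.sub_mulVec, dotProduct_sub, dotProduct_sub,
      dot_vmv_mulVec, dot_vmv_mulVec]
    rw [dotProduct_comm x e, dotProduct_comm x a, dotProduct_comm e y]
    ring
  have frob_odot' : ∀ U W, frob (odot U W) P = U ⬝ᵥ (P *ᵥ W) := by
    intro U W
    rw [frob_odot, dot_mulVec_symm hP W U]; ring
  have hband : ∀ i j, V i ⬝ᵥ (Q *ᵥ V j) = 0 := by
    have key : ∀ i j, i ≤ j → V i ⬝ᵥ (Q *ᵥ V j) = 0 := by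
      intro i j hij
      have h := horth i j hij
      rw [frob_sub, frob_sub, frob_smul, frob_smul, frob_odot', frob_odot', frob_odot'] at h
      rw [hQd, ← haV, ← haV]
      exact h
    intro i j
    rcases le_total i j with h | h
    · exact key i j h
    · have := key j i h
      rw [hQd] at this ⊢
      rw [dot_mulVec_symm hP (V i) (V j)]
      linarith
  have hspan : Submodule.span ℝ (Set.range V) = ⊤ :=
    hV.span_eq_top_of_card_eq_finrank' (by simp)
  have hmem : ∀ x : Fin n → ℝ, x ∈ Submodule.span ℝ (Set.range V) := by
    intro x; rw [hspan]; exact Submodule.mem_top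
  have h1 : ∀ (j : Fin n) (x : Fin n → ℝ), x ⬝ᵥ (Q *ᵥ V j) = 0 := by
    intro j x
    induction hmem x using Submodule.span_induction with
    | mem y hy => obtain ⟨i, rfl⟩ := hy; exact hband i j
    | zero => simp
    | add y z _ _ hy hz => rw [add_dotProduct, hy, hz, add_zero]
    | smul c y _ hy => rw [smul_dotProduct, hy, smul_zero]
  have h2 : ∀ x : Fin n → ℝ, Q *ᵥ x = 0 := by
    intro x
    induction hmem x using Submodule.span_induction with
    | mem y hy =>
        obtain ⟨j, rfl⟩ := hy
        exact dotProduct_self_eq_zero.mp (h1 j (Q *ᵥ V j))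
    | zero => simp [Matrix.mulVec_zero]
    | add y z _ _ hy hz => rw [Matrix.mulVec_add, hy, hz, add_zero]
    | smul c y _ hy => rw [Matrix.mulVec_smul, hy, smul_zero]
  have hQ0 : Q = 0 := by
    ext i j
    have := congrFun (h2 (Pi.single j 1)) i
    simpa using this
  have hPeq : P = vecMulVec e a + vecMulVec a e := by
    have h := hQ0
    rw [hQdef, sub_sub, sub_eq_zero] at h
    exact h
  have hae : a ⬝ᵥ e = 0 := by
    have h := hQd e e
    rw [hQ0, haV e, he] at h
    simp at h
    linarith
  refine ⟨(2:ℝ) • a, ?_, ?_⟩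
  · rw [smul_dotProduct, hae, smul_zero]
  · rw [hPeq]
    ext i j
    simp [odot, vecMulVec_apply, Matrix.add_apply, Matrix.smul_apply, Pi.smul_apply,
      smul_eq_mul]
    ring
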